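/- Let U be a finite nonempty set and let F be a nonempty family of subsets of U. If for each u ∈ U a weight w(u) ∈ {1, 2, …, 2|U|} is chosen uniformly and independently at random, then with probability at least 1/2 there exists an integer w₀ such that exactly one set X ∈ F satisfies w(X) = w₀. -/

import Mathlib

open Finset

private def wtIso {U : Type} [DecidableEq U] (w : U → ℕ) (X : Finset U) : ℕ :=
  ∑ u ∈ X, (w u + 1)

/-- `u` is singular for `w`: some minimum-weight set contains `u` and some
minimum-weight set avoids `u`. -/
private def SingIso {U : Type} [DecidableEq U] (F : Finset (Finset U)) (w : U → ℕ) (u : U) :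
    Prop :=
  ∃ X ∈ F, u ∈ X ∧ (∀ Z ∈ F, wtIso w X ≤ wtIso w Z) ∧
    ∃ Y ∈ F, u ∉ Y ∧ (∀ Z ∈ F, wtIso w Y ≤ wtIso w Z)

private lemma singIso_inj {U : Type} [DecidableEq U] {F : Finset (Finset U)} {w₁ w₂ : U → ℕ}
    {u : U} (h1 : SingIso F w₁ u) (h2 : SingIso F w₂ u)
    (hoff : ∀ v, v ≠ u → w₁ v = w₂ v) : w₁ u = w₂ u := by
  obtain ⟨X₁, hX₁, huX₁, hX₁min, Y₁, hY₁, huY₁, hY₁min⟩ := h1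
  obtain ⟨X₂, hX₂, huX₂, hX₂min, Y₂, hY₂, huY₂, hY₂min⟩ := h2
  have hoff' : ∀ Z : Finset U, u ∉ Z → wtIso w₁ Z = wtIso w₂ Z := fun Z hZ =>
    Finset.sum_congr rfl (fun v hv => by rw [hoff v (fun h => hZ (h ▸ hv))])
  have hsplit : ∀ (w : U → ℕ) (X : Finset U), u ∈ X →
      wtIso w X = (w u + 1) + wtIso w (X.erase u) := fun w X hu =>
    (Finset.add_sum_erase X _ hu).symm
  have hY : wtIso w₁ Y₁ = wtIso w₂ Y₂ :=
    le_antisymm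
      (by calc wtIso w₁ Y₁ ≤ wtIso w₁ Y₂ := hY₁min _ hY₂
            _ = wtIso w₂ Y₂ := hoff' _ huY₂)
      (by calc wtIso w₂ Y₂ ≤ wtIso w₂ Y₁ := hY₂min _ hY₁
            _ = wtIso w₁ Y₁ := (hoff' _ huY₁).symm)
  have hE : wtIso w₁ (X₁.erase u) = wtIso w₂ (X₂.erase u) := by
    have h12 : wtIso w₁ X₁ ≤ wtIso w₁ X₂ := hX₁min _ hX₂
    have h21 : wtIso w₂ X₂ ≤ wtIso w₂ X₁ := hX₂min _ hX₁
    rw [hsplit w₁ X₁ huX₁, hsplit w₁ X₂ huX₂] at h12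
    rw [hsplit w₂ X₂ huX₂, hsplit w₂ X₁ huX₁] at h21
    have e1 : wtIso w₁ (X₂.erase u) = wtIso w₂ (X₂.erase u) :=
      hoff' _ (Finset.notMem_erase u X₂)
    have e2 : wtIso w₁ (X₁.erase u) = wtIso w₂ (X₁.erase u) :=
      hoff' _ (Finset.notMem_erase u X₁)
    omega
  have q1 : wtIso w₁ X₁ = wtIso w₁ Y₁ := le_antisymm (hX₁min _ hY₁) (hY₁min _ hX₁)
  have q2 : wtIso w₂ X₂ = wtIso w₂ Y₂ := le_antisymm (hX₂min _ hY₂) (hY₂min _ hX₂)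
  rw [hsplit w₁ X₁ huX₁] at q1
  rw [hsplit w₂ X₂ huX₂] at q2
  omega

/-- If two distinct minimum-weight sets exist, then some element is singular. -/
private lemma singIso_cover {U : Type} [DecidableEq U] {F : Finset (Finset U)} {w : U → ℕ}
    {X Y : Finset U} (hX : X ∈ F) (hY : Y ∈ F) (hne : X ≠ Y)
    (hXmin : ∀ Z ∈ F, wtIso w X ≤ wtIso w Z) (hYmin : ∀ Z ∈ F, wtIso w Y ≤ wtIso w Z) :
    ∃ u, SingIso F w u := by
  have hex : ∃ u, (u ∈ X ∧ u ∉ Y) ∨ (u ∈ Y ∧ u ∉ X) := by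
    by_contra h
    push_neg at h
    apply hne
    ext a
    have := h a
    tauto
  obtain ⟨u, hu | hu⟩ := hex
  · exact ⟨u, X, hX, hu.1, hXmin, Y, hY, hu.2, hYmin⟩
  · exact ⟨u, Y, hY, hu.1, hYmin, X, hX, hu.2, hXmin⟩

/-- If `U` is a finite nonempty set, `F` is a nonempty family of subsets of `U`, and for each
`u ∈ U` a weight `w(u) ∈ {1,…,2|U|}` is chosen uniformly and independently at random
(equivalently, `w` is uniform among all functions `U → {1,…,2|U|}`), then with probability at
least `1/2` there is a weight `w₀` such that exactly one `X ∈ F` satisfies `w(X) = w₀`. -/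
theorem exists_unique_weight_with_prob_half {U : Type} [Fintype U] [DecidableEq U] [Nonempty U]
    (F : Finset (Finset U)) (hF : F.Nonempty) :
    (1 : ℝ) / 2 ≤
      (Nat.card {w : U → Fin (2 * Fintype.card U) //
          ∃ w₀ : ℕ, ∃! X, X ∈ F ∧ ∑ u ∈ X, ((w u : ℕ) + 1) = w₀} : ℝ) /
        ((2 * Fintype.card U : ℕ) : ℝ) ^ Fintype.card U := by
  classical
  set n := Fintype.card U with hn
  have hnpos : 0 < n := Fintype.card_pos
  set N := 2 * n with hNdef
  have hNpos : 0 < N := by omega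
  set good : Finset (U → Fin N) :=
    univ.filter (fun w => ∃ w₀ : ℕ, ∃! X, X ∈ F ∧ ∑ u ∈ X, ((w u : ℕ) + 1) = w₀) with hgood
  set bad : Finset (U → Fin N) :=
    univ.filter (fun w => ∃ u, SingIso F (fun v => (w v : ℕ)) u) with hbad
  -- total count
  have htotal : (univ : Finset (U → Fin N)).card = N ^ n := by
    simp [Fintype.card_fun, hn]
  -- every non-bad function is good
  have hcover : ∀ w : U → Fin N, w ∉ bad → w ∈ good := by
    intro w hw
    simp only [hbad, mem_filter, mem_univ, true_and, not_exists] at hw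
    simp only [hgood, mem_filter, mem_univ, true_and]
    obtain ⟨X, hXF, hXmin⟩ := Finset.exists_min_image F (wtIso (fun v => (w v : ℕ))) hF
    refine ⟨wtIso (fun v => (w v : ℕ)) X, X, ⟨hXF, rfl⟩, ?_⟩
    rintro Y ⟨hYF, hYw⟩
    by_contra hne
    have hYmin : ∀ Z ∈ F, wtIso (fun v => (w v : ℕ)) Y ≤ wtIso (fun v => (w v : ℕ)) Z := by
      intro Z hZ
      have : wtIso (fun v => (w v : ℕ)) Y = wtIso (fun v => (w v : ℕ)) X := hYw
      rw [this]
      exact hXmin Z hZ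
    obtain ⟨u, hu⟩ := singIso_cover hYF hXF hne hYmin hXmin
    exact hw u hu
  -- bound on each singular-at-u set
  have hbadu : ∀ u : U,
      (univ.filter (fun w : U → Fin N => SingIso F (fun v => (w v : ℕ)) u)).card * N ≤ N ^ n := by
    intro u
    set s := univ.filter (fun w : U → Fin N => SingIso F (fun v => (w v : ℕ)) u) with hs
    have hinj : Set.InjOn (fun p : (U → Fin N) × Fin N => Function.update p.1 u p.2)
        ↑(s ×ˢ (univ : Finset (Fin N))) := by
      rintro ⟨w₁, v₁⟩ h₁ ⟨w₂, v₂⟩ h₂ heq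
      simp only [coe_product, Set.mem_prod, mem_coe, hs, mem_filter, mem_univ, true_and] at h₁ h₂
      have hv : v₁ = v₂ := by
        have := congrFun heq u
        simpa [Function.update] using this
      have hoffF : ∀ x, x ≠ u → w₁ x = w₂ x := by
        intro x hx
        have := congrFun heq x
        simpa [Function.update, hx] using this
      have hoff : ∀ x, x ≠ u → ((w₁ x : ℕ)) = (w₂ x : ℕ) := fun x hx => by rw [hoffF x hx]
      have hu : (w₁ u : ℕ) = (w₂ u : ℕ) := singIso_inj h₁.1 h₂.1 hoff
      have hwe : w₁ = w₂ := by
        funext x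
        by_cases hx : x = u
        · subst hx; exact Fin.ext hu
        · exact hoffF x hx
      simp [hwe, hv]
    have hmaps : ∀ p ∈ s ×ˢ (univ : Finset (Fin N)),
        (fun p : (U → Fin N) × Fin N => Function.update p.1 u p.2) p ∈
          (univ : Finset (U → Fin N)) := fun _ _ => mem_univ _
    have := Finset.card_le_card_of_injOn _ hmaps hinj
    rw [Finset.card_product, Finset.card_univ, Fintype.card_fin] at this
    rw [htotal] at this
    exact this
  -- bound on bad
  have hbadsub : bad ⊆ univ.biUnion
      (fun u : U => univ.filter (fun w : U → Fin N => SingIso F (fun v => (w v : ℕ)) u)) := by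
    intro w hw
    simp only [hbad, mem_filter, mem_univ, true_and] at hw
    obtain ⟨u, hu⟩ := hw
    exact mem_biUnion.mpr ⟨u, mem_univ u, mem_filter.mpr ⟨mem_univ w, hu⟩⟩
  have hbadcard : bad.card * N ≤ n * N ^ n := by
    calc bad.card * N ≤ (univ.biUnion (fun u : U =>
            univ.filter (fun w : U → Fin N => SingIso F (fun v => (w v : ℕ)) u))).card * N :=
          Nat.mul_le_mul_right _ (Finset.card_le_card hbadsub)
      _ ≤ (∑ u : U, (univ.filter
            (fun w : U → Fin N => SingIso F (fun v => (w v : ℕ)) u)).card) * N :=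
          Nat.mul_le_mul_right _ (Finset.card_biUnion_le)
      _ = ∑ u : U, (univ.filter
            (fun w : U → Fin N => SingIso F (fun v => (w v : ℕ)) u)).card * N := by
          rw [Finset.sum_mul]
      _ ≤ ∑ _u : U, N ^ n := Finset.sum_le_sum (fun u _ => hbadu u)
      _ = n * N ^ n := by rw [Finset.sum_const, Finset.card_univ, smul_eq_mul]
  have hbad2 : 2 * bad.card ≤ N ^ n := by
    have h1 : bad.card * N = n * (2 * bad.card) := by
      show bad.card * (2 * n) = n * (2 * bad.card); ring
    have : n * (2 * bad.card) ≤ n * N ^ n := h1 ▸ hbadcard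
    exact Nat.le_of_mul_le_mul_left this hnpos
  have hgb : N ^ n ≤ good.card + bad.card := by
    rw [← htotal]
    calc (univ : Finset (U → Fin N)).card ≤ (good ∪ bad).card := by
          apply Finset.card_le_card
          intro w _
          rcases Finset.mem_union.mpr (by
            by_cases h : w ∈ bad
            · exact Or.inr h
            · exact Or.inl (hcover w h)) with h
          exact h
      _ ≤ good.card + bad.card := Finset.card_union_le _ _
  have hkey : N ^ n ≤ 2 * good.card := by omega
  -- translate Nat.card to good.card
  have hcard : Nat.card {w : U → Fin N //
      ∃ w₀ : ℕ, ∃! X, X ∈ F ∧ ∑ u ∈ X, ((w u : ℕ) + 1) = w₀} = good.card := by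
    rw [Nat.card_eq_fintype_card]
    rw [hgood]
    convert Fintype.card_subtype _
  have hpow : ((2 * Fintype.card U : ℕ) : ℝ) ^ Fintype.card U = ((N ^ n : ℕ) : ℝ) := by
    push_cast [hNdef, hn]
    norm_num
  rw [hpow, hcard]
  rw [div_le_div_iff₀ (by norm_num) (by positivity)]
  have : (N ^ n : ℝ) ≤ 2 * (good.card : ℝ) := by exact_mod_cast hkey
  push_cast
  linarith
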